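/- Let Q be a Minkowski reduced positive definite n×n matrix and suppose there is an integer q > 0 such that |x_j| < q for all x ∈ Min(Q) and all j. Define the lower triangular unimodular matrix W = (w_{ij}) with w_{ij} = q^{i−j} for i ≥ j and w_{ij} = 0 otherwise. Then for every x ∈ Min(Q), the vector Wx lies in ℤ₊ⁿ ∪ (−ℤ₊ⁿ). Consequently, Q is arithmetically equivalent (via U = W^{−1}) to a matrix Q' with Min(Q') ⊆ ±ℤ₊ⁿ. -/
import Mathlib


open Matrix

/-- The quadratic form `x ↦ xᵀ B x`. -/
def qf {n : ℕ} (B : Matrix (Fin n) (Fin n) ℝ) (x : Fin n → ℝ) : ℝ := x ⬝ᵥ B.mulVec x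

/-- Coercion of an integer vector to a real vector. -/
def intCast {n : ℕ} (v : Fin n → ℤ) : Fin n → ℝ := fun i => (v i : ℝ)

/-- `B` is strictly copositive: `xᵀBx > 0` for all nonzero nonnegative `x`. -/
def StrictlyCopositive {n : ℕ} (B : Matrix (Fin n) (Fin n) ℝ) : Prop :=
  ∀ x : Fin n → ℝ, (∀ i, 0 ≤ x i) → x ≠ 0 → 0 < qf B x

/-- The copositive minimum: infimum of `vᵀBv` over nonzero nonnegative integer vectors. -/
noncomputable def copoMin {n : ℕ} (B : Matrix (Fin n) (Fin n) ℝ) : ℝ :=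
  sInf {r : ℝ | ∃ v : Fin n → ℤ, (∀ i, 0 ≤ v i) ∧ v ≠ 0 ∧ r = qf B (intCast v)}

/-- The set of nonzero nonnegative integer vectors attaining the copositive minimum. -/
def MinCOP {n : ℕ} (B : Matrix (Fin n) (Fin n) ℝ) : Set (Fin n → ℤ) :=
  {v | (∀ i, 0 ≤ v i) ∧ v ≠ 0 ∧ qf B (intCast v) = copoMin B}

/-- `B` is perfect copositive: strictly copositive and uniquely determined among
symmetric matrices by the equations `vᵀQv = copoMin B` for `v ∈ MinCOP B`. -/
def IsPerfectCopositive {n : ℕ} (B : Matrix (Fin n) (Fin n) ℝ) : Prop :=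
  B.IsSymm ∧ StrictlyCopositive B ∧
    ∀ Q : Matrix (Fin n) (Fin n) ℝ, Q.IsSymm →
      (∀ v ∈ MinCOP B, qf Q (intCast v) = copoMin B) → Q = B

/-- The arithmetical minimum of a matrix: infimum of `vᵀQv` over nonzero integer vectors. -/
noncomputable def arithMin {n : ℕ} (Q : Matrix (Fin n) (Fin n) ℝ) : ℝ :=
  sInf {r : ℝ | ∃ v : Fin n → ℤ, v ≠ 0 ∧ r = qf Q (intCast v)}

/-- The set of nonzero integer vectors attaining the arithmetical minimum. -/
def MinSet {n : ℕ} (Q : Matrix (Fin n) (Fin n) ℝ) : Set (Fin n → ℤ) :=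
  {v | v ≠ 0 ∧ qf Q (intCast v) = arithMin Q}

/-- `Q` is Minkowski reduced. -/
def MinkowskiReduced {n : ℕ} (Q : Matrix (Fin n) (Fin n) ℝ) : Prop :=
  ∀ (v : Fin n → ℤ) (i : Fin n), v ≠ 0 → Finset.gcd (Finset.Ici i) v = 1 →
    Q i i ≤ qf Q (intCast v)

lemma sum_fin_eq_nat {n : ℕ} (c : ℕ) (f : Fin n → ℤ) :
    (∑ j : Fin n, if (j : ℕ) = c then f j else 0) = if h : c < n then f ⟨c, h⟩ else 0 := by
  split_ifs with h
  · rw [Finset.sum_eq_single (⟨c, h⟩ : Fin n)]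
    · simp
    · intro b _ hb
      rw [if_neg]
      intro hbc
      exact hb (Fin.ext hbc)
    · simp
  · apply Finset.sum_eq_zero
    intro j _
    rw [if_neg]
    intro hj
    exact h (hj ▸ j.isLt)

lemma key_nonneg {n : ℕ} (q : ℕ) (hq : 0 < q) (W : Matrix (Fin n) (Fin n) ℤ)
    (hW : ∀ i j, W i j = if (j : ℕ) ≤ (i : ℕ) then (q : ℤ) ^ ((i : ℕ) - (j : ℕ)) else 0)
    (x : Fin n → ℤ) (hb : ∀ j, |x j| < (q : ℤ)) (k : Fin n) (hk1 : 1 ≤ x k)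
    (hk0 : ∀ j : Fin n, (j : ℕ) < (k : ℕ) → x j = 0) :
    ∀ i, 0 ≤ (W *ᵥ x) i := by
  have hq1 : (1 : ℤ) ≤ (q : ℤ) := by exact_mod_cast hq
  set x' : ℕ → ℤ := fun j => if h : j < n then x ⟨j, h⟩ else 0 with hx'
  set T : ℕ → ℤ := fun m => ∑ j ∈ Finset.range (m + 1), (q : ℤ) ^ (m - j) * x' j with hT
  have hx'k : x' (k : ℕ) = x k := by simp [hx', k.isLt]
  have hx'0 : ∀ j, j < (k : ℕ) → x' j = 0 := by
    intro j hj
    have hjn : j < n := lt_trans hj k.isLt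
    simp [hx', hjn, hk0 ⟨j, hjn⟩ hj]
  have hx'b : ∀ j, |x' j| ≤ (q : ℤ) - 1 := by
    intro j
    by_cases h : j < n
    · simp only [hx', dif_pos h]; have := hb ⟨j, h⟩; omega
    · simp only [hx', dif_neg h]; simp; omega
  have hrec : ∀ m, T (m + 1) = (q : ℤ) * T m + x' (m + 1) := by
    intro m
    have h1 : T (m + 1) = (∑ j ∈ Finset.range (m + 1), (q : ℤ) ^ (m + 1 - j) * x' j)
        + (q : ℤ) ^ (m + 1 - (m + 1)) * x' (m + 1) := by
      rw [hT]; exact Finset.sum_range_succ _ _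
    rw [h1]
    simp only [Nat.sub_self, pow_zero, one_mul]
    congr 1
    rw [hT, Finset.mul_sum]
    apply Finset.sum_congr rfl
    intro j hj
    rw [Finset.mem_range] at hj
    have h2 : m + 1 - j = (m - j) + 1 := by omega
    rw [h2, pow_succ]
    ring
  have main : ∀ m, (m < (k : ℕ) → T m = 0) ∧ ((k : ℕ) ≤ m → 1 ≤ T m) := by
    intro m
    induction m with
    | zero =>
      have hT0 : T 0 = x' 0 := by simp [hT]
      constructor
      · intro h; rw [hT0]; exact hx'0 0 h
      · intro h
        have hk0' : (k : ℕ) = 0 := Nat.le_zero.mp h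
        rw [hT0, ← hk0', hx'k]
        exact hk1
    | succ m ih =>
      constructor
      · intro h
        rw [hrec m, ih.1 (by omega), hx'0 (m + 1) h]
        ring
      · intro h
        rcases Nat.lt_or_ge m (k : ℕ) with hm | hm
        · have hmk : m + 1 = (k : ℕ) := by omega
          rw [hrec m, ih.1 hm, hmk, hx'k]
          linarith [hk1]
        · have h1 : 1 ≤ T m := ih.2 hm
          have h2 : -((q : ℤ) - 1) ≤ x' (m + 1) := (abs_le.mp (hx'b (m + 1))).1
          rw [hrec m]
          nlinarith
  intro i
  have hWx : (W *ᵥ x) i = T (i : ℕ) := by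
    have hf : (W *ᵥ x) i = ∑ j ∈ Finset.range n,
        (if j ≤ (i : ℕ) then (q : ℤ) ^ ((i : ℕ) - j) * x' j else 0) := by
      rw [Matrix.mulVec, dotProduct, ← Fin.sum_univ_eq_sum_range]
      apply Finset.sum_congr rfl
      intro j _
      rw [hW]
      by_cases h : (j : ℕ) ≤ (i : ℕ)
      · simp only [if_pos h]
        have : x' (j : ℕ) = x j := by simp [hx', j.isLt]
        rw [this]
      · simp [h]
    rw [hf]
    rw [← Finset.sum_subset (Finset.range_subset_range.mpr i.isLt)]
    · rw [hT]
      apply Finset.sum_congr rfl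
      intro j hj
      rw [Finset.mem_range] at hj
      rw [if_pos (by omega)]
    · intro j _ hj
      rw [Finset.mem_range] at hj
      rw [if_neg (by omega)]
  rw [hWx]
  rcases Nat.lt_or_ge (i : ℕ) (k : ℕ) with h | h
  · rw [(main (i : ℕ)).1 h]
  · have := (main (i : ℕ)).2 h; omega

lemma w_sign {n : ℕ} (q : ℕ) (hq : 0 < q) (W : Matrix (Fin n) (Fin n) ℤ)
    (hW : ∀ i j, W i j = if (j : ℕ) ≤ (i : ℕ) then (q : ℤ) ^ ((i : ℕ) - (j : ℕ)) else 0)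
    (x : Fin n → ℤ) (hx0 : x ≠ 0) (hb : ∀ j, |x j| < (q : ℤ)) :
    (∀ i, 0 ≤ (W *ᵥ x) i) ∨ (∀ i, (W *ᵥ x) i ≤ 0) := by
  have hne : (Finset.univ.filter fun j => x j ≠ 0).Nonempty := by
    by_contra h
    apply hx0
    funext j
    by_contra hj
    exact h ⟨j, Finset.mem_filter.mpr ⟨Finset.mem_univ j, hj⟩⟩
  set k := Finset.min' _ hne with hkdef
  have hk : x k ≠ 0 := (Finset.mem_filter.mp (Finset.min'_mem _ hne)).2
  have hk0 : ∀ j : Fin n, (j : ℕ) < (k : ℕ) → x j = 0 := by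
    intro j hj
    by_contra hxj
    have hle : k ≤ j := Finset.min'_le _ j (Finset.mem_filter.mpr ⟨Finset.mem_univ j, hxj⟩)
    have : (k : ℕ) ≤ (j : ℕ) := hle
    omega
  rcases lt_or_gt_of_ne hk with hneg | hpos
  · right
    have key := key_nonneg q hq W hW (-x) (by intro j; simpa using hb j) k (by simp; omega)
      (fun j hj => by simp [hk0 j hj])
    intro i
    have h2 := key i
    rw [Matrix.mulVec_neg] at h2
    simpa using h2
  · left
    exact key_nonneg q hq W hW x hb k hpos hk0

lemma WU_eq_one {n : ℕ} (q : ℕ) (W U : Matrix (Fin n) (Fin n) ℤ)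
    (hW : ∀ i j, W i j = if (j : ℕ) ≤ (i : ℕ) then (q : ℤ) ^ ((i : ℕ) - (j : ℕ)) else 0)
    (hU : ∀ i j, U i j = if i = j then 1 else if (i : ℕ) = (j : ℕ) + 1 then -(q : ℤ) else 0) :
    W * U = 1 := by
  ext i k
  rw [Matrix.mul_apply]
  have hterm : ∀ j : Fin n, W i j * U j k =
      (if j = k then W i j else 0) + (if (j : ℕ) = (k : ℕ) + 1 then -(q : ℤ) * W i j else 0) := by
    intro j
    rw [hU]
    split_ifs with h1 h2 h2
    · exfalso; subst h1; omega
    · subst h1; ring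
    · ring
    · ring
  rw [Finset.sum_congr rfl (fun j _ => hterm j), Finset.sum_add_distrib]
  rw [Finset.sum_ite_eq' Finset.univ k (fun j => W i j), if_pos (Finset.mem_univ k)]
  rw [sum_fin_eq_nat ((k : ℕ) + 1) (fun j => -(q : ℤ) * W i j)]
  rw [Matrix.one_apply]
  by_cases hkn : (k : ℕ) + 1 < n
  · rw [dif_pos hkn, hW, hW]
    simp only []
    by_cases hik : i = k
    · subst hik
      rw [if_pos (le_refl _), if_neg (by omega), if_pos rfl]
      simp
    · have hvne : (i : ℕ) ≠ (k : ℕ) := fun h => hik (Fin.ext h)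
      rw [if_neg hik]
      by_cases hki : (k : ℕ) ≤ (i : ℕ)
      · have hki' : (k : ℕ) + 1 ≤ (i : ℕ) := by omega
        rw [if_pos hki, if_pos hki']
        have : (i : ℕ) - (k : ℕ) = ((i : ℕ) - ((k : ℕ) + 1)) + 1 := by omega
        rw [this, pow_succ]
        ring
      · rw [if_neg hki, if_neg (by omega)]
        ring
  · rw [dif_neg hkn, hW]
    have hin : (i : ℕ) < n := i.isLt
    by_cases hik : i = k
    · subst hik
      rw [if_pos (le_refl _), if_pos rfl]
      simp
    · have hvne : (i : ℕ) ≠ (k : ℕ) := fun h => hik (Fin.ext h)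
      rw [if_neg hik, if_neg (by omega)]
      ring

lemma qf_congr {n : ℕ} (Q A : Matrix (Fin n) (Fin n) ℝ) (v : Fin n → ℝ) :
    qf (Aᵀ * Q * A) v = qf Q (A *ᵥ v) := by
  unfold qf
  rw [← Matrix.mulVec_mulVec, ← Matrix.mulVec_mulVec, Matrix.dotProduct_mulVec,
    Matrix.vecMul_transpose]

lemma intCast_mulVec {n : ℕ} (A : Matrix (Fin n) (Fin n) ℤ) (v : Fin n → ℤ) :
    intCast (A *ᵥ v) = (A.map (Int.cast : ℤ → ℝ)) *ᵥ intCast v := by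
  funext i
  simp only [intCast, Matrix.mulVec, dotProduct, Matrix.map_apply]
  push_cast
  rfl

lemma arithMin_congr {n : ℕ} (Q : Matrix (Fin n) (Fin n) ℝ) (U V : Matrix (Fin n) (Fin n) ℤ)
    (hUV : U * V = 1) (hVU : V * U = 1) :
    arithMin ((U.map (Int.cast : ℤ → ℝ))ᵀ * Q * U.map (Int.cast : ℤ → ℝ)) = arithMin Q := by
  unfold arithMin
  congr 1
  ext r
  constructor
  · rintro ⟨v, hv, rfl⟩
    refine ⟨U *ᵥ v, ?_, ?_⟩
    · intro h
      apply hv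
      have h2 : V *ᵥ (U *ᵥ v) = v := by rw [Matrix.mulVec_mulVec, hVU, Matrix.one_mulVec]
      rw [h, Matrix.mulVec_zero] at h2
      exact h2.symm
    · rw [qf_congr, ← intCast_mulVec]
  · rintro ⟨w, hw, rfl⟩
    refine ⟨V *ᵥ w, ?_, ?_⟩
    · intro h
      apply hw
      have h2 : U *ᵥ (V *ᵥ w) = w := by rw [Matrix.mulVec_mulVec, hUV, Matrix.one_mulVec]
      rw [h, Matrix.mulVec_zero] at h2
      exact h2.symm
    · rw [qf_congr, ← intCast_mulVec, Matrix.mulVec_mulVec, hUV, Matrix.one_mulVec]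

theorem minkowski_reduced_embedding {n : ℕ} (Q : Matrix (Fin n) (Fin n) ℝ)
    (hQ : Q.PosDef) (hred : MinkowskiReduced Q) (q : ℕ) (hq : 0 < q)
    (hbound : ∀ x ∈ MinSet Q, ∀ j, |x j| < (q : ℤ))
    (W : Matrix (Fin n) (Fin n) ℤ)
    (hW : ∀ i j, W i j = if (j : ℕ) ≤ (i : ℕ) then (q : ℤ) ^ ((i : ℕ) - (j : ℕ)) else 0) :
    (∀ x ∈ MinSet Q, (∀ i, 0 ≤ (W *ᵥ x) i) ∨ (∀ i, (W *ᵥ x) i ≤ 0)) ∧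
    (∃ U : Matrix (Fin n) (Fin n) ℤ, IsUnit U.det ∧
      ∀ x ∈ MinSet ((U.map (Int.cast : ℤ → ℝ))ᵀ * Q * U.map (Int.cast : ℤ → ℝ)),
        (∀ i, 0 ≤ x i) ∨ (∀ i, x i ≤ 0)) := by
  have part1 : ∀ x ∈ MinSet Q, (∀ i, 0 ≤ (W *ᵥ x) i) ∨ (∀ i, (W *ᵥ x) i ≤ 0) := by
    intro x hx
    exact w_sign q hq W hW x hx.1 (fun j => hbound x hx j)
  refine ⟨part1, ?_⟩
  set U : Matrix (Fin n) (Fin n) ℤ :=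
    Matrix.of (fun i j => if i = j then 1 else if (i : ℕ) = (j : ℕ) + 1 then -(q : ℤ) else 0)
    with hUdef
  have hWU : W * U = 1 := WU_eq_one q W U hW (fun i j => rfl)
  have hUW : U * W = 1 := mul_eq_one_comm.mp hWU
  refine ⟨U, Matrix.isUnit_det_of_left_inverse hWU, ?_⟩
  intro x hx
  obtain ⟨hx0, hxmin⟩ := hx
  have hx' : U *ᵥ x ∈ MinSet Q := by
    constructor
    · intro h
      apply hx0
      have h2 : W *ᵥ (U *ᵥ x) = x := by rw [Matrix.mulVec_mulVec, hWU, Matrix.one_mulVec]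
      rw [h, Matrix.mulVec_zero] at h2
      exact h2.symm
    · have h3 : qf Q (intCast (U *ᵥ x)) =
          qf ((U.map (Int.cast : ℤ → ℝ))ᵀ * Q * U.map (Int.cast : ℤ → ℝ)) (intCast x) := by
        rw [qf_congr, ← intCast_mulVec]
      rw [h3, hxmin, arithMin_congr Q U W hUW hWU]
  have hsign := part1 (U *ᵥ x) hx'
  have hWUx : W *ᵥ (U *ᵥ x) = x := by rw [Matrix.mulVec_mulVec, hWU, Matrix.one_mulVec]
  rw [hWUx] at hsign
  exact hsign
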